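/- If A and B are upward-closed (under divisibility) N-free sets of positive natural numbers, then A ∩ B is N-free. -/

import Mathlib

/-- A set of positive naturals is upward closed under divisibility. -/
def upClosed (A : Set ℕ+) : Prop := ∀ a ∈ A, ∀ n : ℕ+, a ∣ n → n ∈ A

/-- The divisibility relation `∼∣` on ultrafilters: `F ∩ U ⊆ G`. -/
def sdvd (F G : Ultrafilter ℕ+) : Prop := ∀ A : Set ℕ+, A ∈ F → upClosed A → A ∈ G

/-- The product ultrafilter: `A ∈ F·G ↔ {n | {m | m*n ∈ A} ∈ G} ∈ F`. -/
def mulUF (F G : Ultrafilter ℕ+) : Ultrafilter ℕ+ :=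
  F.bind (fun n => G.map (fun m => m * n))

/-- `D(F) = {A | {n | nℕ₊ ⊆ A} ∈ F}`. -/
def DF (F : Ultrafilter ℕ+) : Set (Set ℕ+) :=
  {A | {n : ℕ+ | ∀ m : ℕ+, n * m ∈ A} ∈ F}

/-- A strong antichain: pairwise coprime elements. -/
def strongAntichain (X : Set ℕ+) : Prop :=
  X.Pairwise (fun a b => Nat.Coprime (a : ℕ) (b : ℕ))

/-- An N-free ultrafilter contains no `nℕ₊` with `n ≠ 1`. -/
def NfreeUF (F : Ultrafilter ℕ+) : Prop :=
  ∀ n : ℕ+, n ≠ 1 → {m : ℕ+ | n ∣ m} ∉ F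

/-- An upward-closed-free set contains an element coprime to any given `N`. -/
lemma exists_coprime_of_not_covered (A : Set ℕ+)
    (hAf : ¬ ∃ s : Finset ℕ+, (∀ n ∈ s, n ≠ 1) ∧ A ⊆ ⋃ n ∈ s, {m : ℕ+ | n ∣ m})
    (N : ℕ+) : ∃ a ∈ A, Nat.Coprime (a : ℕ) (N : ℕ) := by
  by_contra h
  push_neg at h
  apply hAf
  refine ⟨(N : ℕ).primeFactors.attach.image
    (fun p => (⟨p.1, (Nat.prime_of_mem_primeFactors p.2).pos⟩ : ℕ+)), ?_, ?_⟩
  · intro n hn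
    replace hn := Finset.mem_image.mp hn
    obtain ⟨p, -, rfl⟩ := hn
    have hp := Nat.prime_of_mem_primeFactors p.2
    intro h1
    have : (p : ℕ) = 1 := congrArg (PNat.val) h1
    exact hp.one_lt.ne' this
  · intro a ha
    have hnc := h a ha
    have : Nat.gcd (a : ℕ) (N : ℕ) ≠ 1 := hnc
    obtain ⟨p, hp, hpd⟩ := Nat.exists_prime_and_dvd this
    have hpa : p ∣ (a : ℕ) := hpd.trans (Nat.gcd_dvd_left _ _)
    have hpN : p ∣ (N : ℕ) := hpd.trans (Nat.gcd_dvd_right _ _)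
    have hpmem : p ∈ (N : ℕ).primeFactors :=
      Nat.mem_primeFactors.mpr ⟨hp, hpN, N.ne_zero⟩
    simp only [Set.mem_iUnion, Set.mem_setOf_eq]
    refine ⟨⟨p, hp.pos⟩, ?_, ?_⟩
    · exact Finset.mem_image.mpr ⟨⟨p, hpmem⟩, Finset.mem_attach _ _, rfl⟩
    · exact PNat.dvd_iff.mpr hpa

/-- the intersection of two upward-closed N-free sets is N-free. -/
theorem inter_Nfree (A B : Set ℕ+)
    (hA : upClosed A) (hB : upClosed B)
    (hAf : ¬ ∃ s : Finset ℕ+, (∀ n ∈ s, n ≠ 1) ∧ A ⊆ ⋃ n ∈ s, {m : ℕ+ | n ∣ m})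
    (hBf : ¬ ∃ s : Finset ℕ+, (∀ n ∈ s, n ≠ 1) ∧ B ⊆ ⋃ n ∈ s, {m : ℕ+ | n ∣ m}) :
    ¬ ∃ s : Finset ℕ+, (∀ n ∈ s, n ≠ 1) ∧ A ∩ B ⊆ ⋃ n ∈ s, {m : ℕ+ | n ∣ m} := by
  rintro ⟨s, hs1, hs2⟩
  set N : ℕ+ := ∏ n ∈ s, n with hN
  obtain ⟨a, ha, hac⟩ := exists_coprime_of_not_covered A hAf N
  obtain ⟨b, hb, hbc⟩ := exists_coprime_of_not_covered B hBf N
  have hab : a * b ∈ A ∩ B :=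
    ⟨hA a ha _ (dvd_mul_right a b), hB b hb _ (dvd_mul_left b a)⟩
  have := hs2 hab
  simp only [Set.mem_iUnion, Set.mem_setOf_eq] at this
  obtain ⟨n, hns, hnd⟩ := this
  obtain ⟨p, hp, hpn⟩ := Nat.exists_prime_and_dvd
    (fun h1 : (n : ℕ) = 1 => hs1 n hns (PNat.coe_injective h1))
  have hnN : n ∣ N := Finset.dvd_prod_of_mem _ hns
  have hpN : p ∣ (N : ℕ) := hpn.trans (PNat.dvd_iff.mp hnN)
  have hpab : p ∣ (a : ℕ) * (b : ℕ) := by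
    have := PNat.dvd_iff.mp hnd
    rw [PNat.mul_coe] at this
    exact hpn.trans this
  rcases hp.dvd_mul.mp hpab with hpa | hpb
  · exact hp.one_lt.ne' (Nat.eq_one_of_dvd_one (hac ▸ Nat.dvd_gcd hpa hpN))
  · exact hp.one_lt.ne' (Nat.eq_one_of_dvd_one (hbc ▸ Nat.dvd_gcd hpb hpN))
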